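/- Let d ≥ 3 be a divisor of m and let R ∈ E(K̄) be a point of exact order m (i.e. of additive order m in the group E(K̄)). Then K(x(R), y(R)) = K(x(R), y((m/d)·R)), where x(·) and y(·) denote the coordinates of a point. In particular, if K = K(E[d]) (the coordinates of all d-torsion points already lie in K), then K(x(R), y(R)) = K(x(R)). -/

import Mathlib

/-- The short Weierstrass curve `y² = x³ + A·x + B` base-changed to `F`: its coefficients are
the images under `algebraMap K F` of `A, B ∈ K`. -/
def baseW (K F : Type*) [Field K] [Field F] [Algebra K F] (A B : K) :
    WeierstrassCurve.Affine F :=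
  { a₁ := 0, a₂ := 0, a₃ := 0, a₄ := algebraMap K F A, a₆ := algebraMap K F B }

open Classical in
/-- `K(E[m])`: the intermediate field of `F/K` generated by the coordinates of all `m`-torsion
points of the curve `W`. -/
noncomputable def torsionField (K : Type*) {F : Type*} [Field K] [Field F] [Algebra K F]
    (W : WeierstrassCurve.Affine F) (m : ℕ) : IntermediateField K F :=
  IntermediateField.adjoin K
    {c | ∃ (x y : F) (h : W.Nonsingular x y),
      m • (WeierstrassCurve.Affine.Point.some _ _ h : WeierstrassCurve.Affine.Point W) = 0 ∧
      (c = x ∨ c = y)}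

open Classical in
/-- `K_{m,x}`: the intermediate field of `F/K` generated by the x-coordinates of all `m`-torsion
points of the curve `W`. -/
noncomputable def torsionXField (K : Type*) {F : Type*} [Field K] [Field F] [Algebra K F]
    (W : WeierstrassCurve.Affine F) (m : ℕ) : IntermediateField K F :=
  IntermediateField.adjoin K
    {c | ∃ (y : F) (h : W.Nonsingular c y),
      m • (WeierstrassCurve.Affine.Point.some _ _ h : WeierstrassCurve.Affine.Point W) = 0}

open Classical in
/-- `P, Q` form a `ℤ/mℤ`-basis of the `m`-torsion subgroup `E[m]`. -/
def IsTorsionBasis {F : Type*} [Field F] {W : WeierstrassCurve.Affine F}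
    (m : ℕ) (P Q : WeierstrassCurve.Affine.Point W) : Prop :=
  m • P = 0 ∧ m • Q = 0 ∧
  (∀ R : WeierstrassCurve.Affine.Point W, m • R = 0 → ∃ a b : ℤ, R = a • P + b • Q) ∧
  (∀ a b : ℤ, a • P + b • Q = 0 → (m : ℤ) ∣ a ∧ (m : ℤ) ∣ b)

open Classical in
/-- The coordinatewise Galois action: the automorphism `σ` sends the point `P` to the point
`Q`. -/
def galSends {K F : Type*} [Field K] [Field F] [Algebra K F] {W : WeierstrassCurve.Affine F}
    (σ : F ≃ₐ[K] F) (P Q : WeierstrassCurve.Affine.Point W) : Prop :=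
  (P = 0 ∧ Q = 0) ∨
  (∃ (x y x' y' : F) (h : W.Nonsingular x y) (h' : W.Nonsingular x' y'),
    P = WeierstrassCurve.Affine.Point.some _ _ h ∧ Q = WeierstrassCurve.Affine.Point.some _ _ h' ∧
    σ x = x' ∧ σ y = y')

private def W0 {K : Type*} [Field K] (A B : K) : WeierstrassCurve.Affine K :=
  { a₁ := 0, a₂ := 0, a₃ := 0, a₄ := A, a₆ := B }

open WeierstrassCurve.Affine

private lemma baseW_eq (K F : Type*) [Field K] [Field F] [Algebra K F] (A B : K) :
    baseW K F A B = ((W0 A B).baseChange F).toAffine := by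
  ext <;> simp [baseW, W0]

private lemma Point_some_eq {F : Type*} [Field F] {W : WeierstrassCurve.Affine F}
    {x₁ y₁ x₂ y₂ : F}
    (h₁ : W.Nonsingular x₁ y₁) (h₂ : W.Nonsingular x₂ y₂) (hx : x₁ = x₂) (hy : y₁ = y₂) :
    WeierstrassCurve.Affine.Point.some _ _ h₁ = WeierstrassCurve.Affine.Point.some _ _ h₂ := by
  subst hx; subst hy; rfl

open Classical in
private lemma coords_mem {K Kbar : Type*} [Field K] [Field Kbar] [Algebra K Kbar]
    (W₀ : WeierstrassCurve.Affine K) (L : IntermediateField K Kbar)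
    {xR yR : Kbar} (hx : xR ∈ L) (hy : yR ∈ L)
    (hR : ((W₀.baseChange Kbar).toAffine).Nonsingular xR yR) (n : ℕ)
    {x' y' : Kbar} (h' : ((W₀.baseChange Kbar).toAffine).Nonsingular x' y')
    (hS : n • (WeierstrassCurve.Affine.Point.some _ _ hR) = WeierstrassCurve.Affine.Point.some _ _ h') :
    x' ∈ L ∧ y' ∈ L := by
  have hLns : ((W₀.baseChange L).toAffine).Nonsingular ⟨xR, hx⟩ ⟨yR, hy⟩ :=
    (WeierstrassCurve.Affine.baseChange_nonsingular (f := L.val) W₀ L.val.injective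
      (⟨xR, hx⟩ : L) ⟨yR, hy⟩).mp hR
  have hmapR : Point.map (W' := W₀) L.val (Point.some _ _ hLns) = Point.some _ _ hR := by
    rw [Point.map_some]; rfl
  have hmap : Point.map (W' := W₀) L.val (n • Point.some _ _ hLns) = Point.some _ _ h' := by
    rw [map_nsmul, hmapR, hS]
  cases hQ : (n • Point.some _ _ hLns : _) with
  | zero =>
    rw [hQ] at hmap
    exact absurd hmap.symm (Point.some_ne_zero h')
  | @some xq yq hq =>
    rw [hQ, Point.map_some] at hmap
    obtain ⟨h1, h2⟩ := Point.some.inj hmap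
    constructor
    · rw [← h1]; exact xq.2
    · rw [← h2]; exact yq.2

private lemma galois_neg {K Kbar : Type*} [Field K] [Field Kbar] [Algebra K Kbar]
    [IsAlgClosure K Kbar]
    (L' : IntermediateField K Kbar) {yR : Kbar} (hc : yR ^ 2 ∈ L') (hyL' : yR ∉ L') :
    ∃ σ : Kbar ≃ₐ[L'] Kbar, σ yR = -yR := by
  haveI : IsAlgClosed Kbar := IsAlgClosure.isAlgClosed K
  haveI : Algebra.IsAlgebraic K Kbar := IsAlgClosure.isAlgebraic
  haveI : Algebra.IsAlgebraic L' Kbar := Algebra.IsAlgebraic.tower_top (K := K) L'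
  haveI : IsAlgClosure L' Kbar := ⟨inferInstance, inferInstance⟩
  haveI : Normal L' Kbar := IsAlgClosure.normal L' Kbar
  have halg : IsAlgebraic L' yR := Algebra.IsAlgebraic.isAlgebraic yR
  have hint : IsIntegral L' yR := halg.isIntegral
  set p : Polynomial L' := Polynomial.X ^ 2 - Polynomial.C (⟨yR ^ 2, hc⟩ : L') with hpdef
  have hev : Polynomial.aeval yR p = 0 := by
    simp [hpdef, IntermediateField.algebraMap_apply]
  have hdvd := minpoly.dvd L' yR hev
  have hpmonic : p.Monic := Polynomial.monic_X_pow_sub_C _ (by norm_num)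
  have hpne : p ≠ 0 := hpmonic.ne_zero
  have hpdeg : p.natDegree = 2 := Polynomial.natDegree_X_pow_sub_C
  have hminmonic := minpoly.monic hint
  have hmindeg : (minpoly L' yR).natDegree = 2 := by
    have hle : (minpoly L' yR).natDegree ≤ 2 := hpdeg ▸ Polynomial.natDegree_le_of_dvd hdvd hpne
    have hpos : 0 < (minpoly L' yR).natDegree := minpoly.natDegree_pos hint
    have hne1 : (minpoly L' yR).natDegree ≠ 1 := by
      intro h1
      apply hyL'
      have : (minpoly L' yR).degree = 1 := by
        rw [Polynomial.degree_eq_natDegree (minpoly.ne_zero hint), h1]; rfl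
      obtain ⟨z, hz⟩ := (minpoly.degree_eq_one_iff).mp this
      rw [← hz]; exact z.2
    omega
  have hpeq : minpoly L' yR = p := by
    obtain ⟨q, hq⟩ := hdvd
    have hqmonic : q.Monic := by
      have hm : (minpoly L' yR * q).Monic := by rw [← hq]; exact hpmonic
      exact hminmonic.of_mul_monic_left hm
    have hqdeg : q.natDegree = 0 := by
      have := Polynomial.natDegree_mul (minpoly.ne_zero hint) hqmonic.ne_zero
      rw [← hq, hpdeg, hmindeg] at this
      omega
    rw [hq, hqmonic.natDegree_eq_zero.mp hqdeg, mul_one]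
  have hev' : Polynomial.aeval (-yR) (minpoly L' yR) = 0 := by
    rw [hpeq]
    simp [hpdef, IntermediateField.algebraMap_apply]
  exact minpoly.exists_algEquiv_of_root' halg hev'

open Classical in
/-- If `d ≥ 3` divides `m` and `R` has exact order `m`, then
`K(x(R), y(R)) = K(x(R), y((m/d)·R))`; in particular if `K = K(E[d])` then
`K(x(R), y(R)) = K(x(R))`. -/
theorem stmt12 (K : Type*) [Field K] (hchar2 : (2 : K) ≠ 0) (hchar3 : (3 : K) ≠ 0)
    (Kbar : Type*) [Field Kbar] [Algebra K Kbar] [IsAlgClosure K Kbar]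
    (A B : K) (hΔ : 4 * A ^ 3 + 27 * B ^ 2 ≠ 0)
    (m : ℕ) (hm : 2 ≤ m) (hmchar : (m : K) ≠ 0)
    (d : ℕ) (hd3 : 3 ≤ d) (hdm : d ∣ m)
    (xR yR : Kbar) (hR : (baseW K Kbar A B).Nonsingular xR yR)
    (hord : addOrderOf (WeierstrassCurve.Affine.Point.some _ _ hR) = m) :
    (∃ (x' y' : Kbar) (h' : (baseW K Kbar A B).Nonsingular x' y'),
      (m / d) • WeierstrassCurve.Affine.Point.some _ _ hR
          = WeierstrassCurve.Affine.Point.some _ _ h' ∧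
        IntermediateField.adjoin K {xR, yR} = IntermediateField.adjoin K {xR, y'}) ∧
    (torsionField K (baseW K Kbar A B) d = ⊥ →
      IntermediateField.adjoin K {xR, yR} = IntermediateField.adjoin K {xR}) := by
  revert hR
  rw [baseW_eq]
  intro hR hord
  set k := m / d with hkdef
  -- arithmetic facts
  have hk1 : 1 ≤ k := Nat.one_le_div_iff (by omega) |>.mpr (Nat.le_of_dvd (by omega) hdm)
  have hkm : d * k = m := Nat.mul_div_cancel' hdm
  have hklt : k < m := Nat.div_lt_self (by omega) (by omega)
  have hm3k : 3 * k ≤ m := by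
    calc 3 * k ≤ d * k := Nat.mul_le_mul_right _ hd3
    _ = m := hkm
  -- divisibility criterion
  have horddvd : ∀ n : ℕ, n • (Point.some _ _ hR) = 0 ↔ m ∣ n := by
    intro n
    rw [← addOrderOf_dvd_iff_nsmul_eq_zero, hord]
  -- the point S = k • R is nonzero
  have hSne : k • (Point.some _ _ hR) ≠ 0 := by
    intro h0
    have hdvd := (horddvd k).mp h0
    have := Nat.le_of_dvd (by omega) hdvd
    omega
  -- negY is plain negation on our curve
  have hnegY : ∀ x y : Kbar, (((W0 A B).baseChange Kbar).toAffine).negY x y = -y := by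
    intro x y
    simp [WeierstrassCurve.Affine.negY, W0]
  cases hQ : (k • Point.some _ _ hR : _) with
  | zero => exact absurd hQ hSne
  | @some x' y' h' =>
    -- coordinates of S lie in K(xR, yR)
    have hxL : xR ∈ IntermediateField.adjoin K {xR, yR} :=
      IntermediateField.subset_adjoin _ _ (Set.mem_insert _ _)
    have hyL : yR ∈ IntermediateField.adjoin K {xR, yR} :=
      IntermediateField.subset_adjoin _ _ (by simp)
    obtain ⟨hx'L, hy'L⟩ := coords_mem (W0 A B) _ hxL hyL hR k h' hQ
    -- xR, y' ∈ L'
    have hxL' : xR ∈ IntermediateField.adjoin K {xR, y'} :=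
      IntermediateField.subset_adjoin _ _ (Set.mem_insert _ _)
    have hy'L' : y' ∈ IntermediateField.adjoin K {xR, y'} :=
      IntermediateField.subset_adjoin _ _ (by simp)
    -- the curve equation for R
    have hyR2 : yR ^ 2 = xR ^ 3 + algebraMap K Kbar A * xR + algebraMap K Kbar B := by
      have heq := (WeierstrassCurve.Affine.equation_iff
        (W := ((W0 A B).baseChange Kbar).toAffine) xR yR).mp hR.1
      simp [W0] at heq
      linear_combination heq
    -- yR belongs to K(xR, y')
    have hyRL' : yR ∈ IntermediateField.adjoin K {xR, y'} := by
      by_contra hyL'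
      set L' := IntermediateField.adjoin K {xR, y'} with hL'def
      have hc : yR ^ 2 ∈ L' := by
        rw [hyR2]
        exact add_mem (add_mem (pow_mem hxL' 3) (mul_mem (L'.algebraMap_mem A) hxL'))
          (L'.algebraMap_mem B)
      obtain ⟨σ, hσ⟩ := galois_neg L' hc hyL'
      set f : Kbar →ₐ[K] Kbar := ((σ.restrictScalars K : Kbar ≃ₐ[K] Kbar) : Kbar →ₐ[K] Kbar)
        with hfdef
      have hf : ∀ z ∈ L', f z = z := fun z hz => σ.commutes ⟨z, hz⟩
      have hfyR : f yR = -yR := hσ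
      have hmapR : Point.map (W' := W0 A B) f (Point.some _ _ hR) = -(Point.some _ _ hR) := by
        rw [Point.map_some, Point.neg_some]
        exact Point_some_eq _ _ (hf xR hxL') (by rw [hnegY, hfyR])
      have hmapS : Point.map (W' := W0 A B) f (k • Point.some _ _ hR) = -(k • Point.some _ _ hR) := by
        rw [map_nsmul, hmapR, smul_neg]
      rw [hQ, Point.map_some, Point.neg_some] at hmapS
      obtain ⟨h1, h2⟩ := Point.some.inj hmapS
      have hy'' : y' = -y' := by
        have hfy := hf y' hy'L'
        rw [h2, hnegY] at hfy
        exact hfy.symm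
      have hSneg : Point.some _ _ h' = -(Point.some _ _ h') := by
        rw [Point.neg_some]
        exact Point_some_eq _ _ rfl (by rw [hnegY, ← hy''])
      have h2S : (2 : ℕ) • (k • Point.some _ _ hR) = 0 := by
        rw [hQ, two_nsmul]
        exact add_eq_zero_iff_eq_neg.mpr hSneg
      rw [smul_smul, horddvd] at h2S
      have hle : m ≤ 2 * k := Nat.le_of_dvd (by omega) h2S
      omega
    -- main field equality
    have hEq : IntermediateField.adjoin K {xR, yR} = IntermediateField.adjoin K {xR, y'} := by
      apply le_antisymm
      · rw [IntermediateField.adjoin_le_iff]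
        exact Set.insert_subset_iff.mpr ⟨hxL', Set.singleton_subset_iff.mpr hyRL'⟩
      · rw [IntermediateField.adjoin_le_iff]
        exact Set.insert_subset_iff.mpr ⟨hxL, Set.singleton_subset_iff.mpr hy'L⟩
    refine ⟨⟨x', y', h', rfl, hEq⟩, ?_⟩
    intro hbot
    have hd_tor : d • (Point.some _ _ h' : Point (((W0 A B).baseChange Kbar).toAffine)) = 0 := by
      rw [← hQ, smul_smul, hkm, ← hord]
      exact addOrderOf_nsmul_eq_zero _
    have hy'tor : y' ∈ torsionField K (((W0 A B).baseChange Kbar).toAffine) d :=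
      IntermediateField.subset_adjoin _ _ ⟨x', y', h', hd_tor, Or.inr rfl⟩
    rw [hbot] at hy'tor
    obtain ⟨z, hz⟩ := IntermediateField.mem_bot.mp hy'tor
    have h2 : IntermediateField.adjoin K {xR, y'} = IntermediateField.adjoin K {xR} := by
      apply le_antisymm
      · rw [IntermediateField.adjoin_le_iff]
        refine Set.insert_subset_iff.mpr ⟨IntermediateField.subset_adjoin _ _ rfl, ?_⟩
        refine Set.singleton_subset_iff.mpr ?_
        rw [← hz]
        exact (IntermediateField.adjoin K {xR}).algebraMap_mem z
      · exact IntermediateField.adjoin.mono _ _ _ (Set.singleton_subset_iff.mpr (Set.mem_insert _ _))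
    exact hEq.trans h2
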